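/- Let d ≥ 2, let {T_n}_{n≥1} be any sequence of Lebesgue-measure-preserving bijections of Q_d := (0,1)^d, and let λ_n > 0 satisfy λ_n → 0 as n → ∞. Then there exists a Lebesgue-measurable set A ⊆ Q_d with |A| = 1/2 and a strictly increasing sequence n_1 < n_2 < ⋯ of positive integers such that for each j ∈ ℕ, T_{n_j}(A) contains a Euclidean ball of radius λ_{n_j}^{1/d}. -/

import Mathlib

open MeasureTheory Set Filter

/-- The open unit cube `Q_d = (0,1)^d` in `ℝ^d` (with the Euclidean norm). -/
def Qd (d : ℕ) : Set (EuclideanSpace ℝ (Fin d)) := {x | ∀ i, x i ∈ Ioo (0:ℝ) 1}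

section auxiliary
variable {d : ℕ}

lemma Qd_eq_preimage : Qd d = (MeasurableEquiv.toLp 2 (Fin d → ℝ)).symm ⁻¹' (univ.pi fun _ => Ioo (0:ℝ) 1) := by
  ext x; simp [Qd, Set.mem_pi]

lemma measurableSet_Qd : MeasurableSet (Qd d) := by
  rw [Qd_eq_preimage]
  exact (MeasurableEquiv.measurable _) (MeasurableSet.univ_pi fun _ => measurableSet_Ioo)

lemma volume_Qd : volume (Qd d) = 1 := by
  rw [Qd_eq_preimage,
    (EuclideanSpace.volume_preserving_symm_measurableEquiv_toLp (Fin d)).measure_preimage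
      (MeasurableSet.univ_pi fun _ => measurableSet_Ioo).nullMeasurableSet]
  simp [volume_pi_pi]

lemma coord_dist_le (x y : EuclideanSpace ℝ (Fin d)) (i : Fin d) :
    |x i - y i| ≤ dist x y := by
  rw [EuclideanSpace.dist_eq]
  have h1 : |x i - y i| = Real.sqrt (dist (x i) (y i) ^ 2) := by
    rw [Real.sqrt_sq_eq_abs, Real.dist_eq, abs_abs]
  rw [h1]
  apply Real.sqrt_le_sqrt
  exact Finset.single_le_sum (f := fun j => dist (x j) (y j) ^ 2)
    (fun j _ => sq_nonneg _) (Finset.mem_univ i)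

noncomputable def midpt (d : ℕ) : EuclideanSpace ℝ (Fin d) := WithLp.toLp 2 (fun _ => 1/2)

lemma ball_subset_Qd {r : ℝ} (hr : r ≤ 1/2) :
    Metric.ball (midpt d) r ⊆ Qd d := by
  intro x hx
  rw [Metric.mem_ball] at hx
  intro i
  have := (coord_dist_le x (midpt d) i).trans_lt hx
  rw [show midpt d i = 1/2 from rfl] at this
  have h2 : |x i - 1/2| < 1/2 := this.trans_le hr
  rw [abs_lt] at h2
  constructor <;> [linarith [h2.1]; linarith [h2.2]]

lemma volume_ball_le (c : EuclideanSpace ℝ (Fin d)) (r : ℝ) :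
    volume (Metric.ball c r) ≤ ENNReal.ofReal (2*r) ^ d := by
  have hsub : Metric.ball c r ⊆
      (MeasurableEquiv.toLp 2 (Fin d → ℝ)).symm ⁻¹' (univ.pi fun i => Ioo (c i - r) (c i + r)) := by
    intro x hx
    rw [Metric.mem_ball] at hx
    intro i _
    show x i ∈ _
    have := (coord_dist_le x c i).trans_lt hx
    rw [abs_lt] at this
    exact ⟨by linarith [this.1], by linarith [this.2]⟩
  calc volume (Metric.ball c r) ≤ _ := measure_mono hsub
  _ = volume (univ.pi fun i : Fin d => Ioo (c i - r) (c i + r)) :=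
      (EuclideanSpace.volume_preserving_symm_measurableEquiv_toLp (Fin d)).measure_preimage
        (MeasurableSet.univ_pi fun _ => measurableSet_Ioo).nullMeasurableSet
  _ = ∏ _i : Fin d, ENNReal.ofReal (2*r) := by
      rw [volume_pi_pi]
      congr 1; ext i; rw [Real.volume_Ioo]; ring_nf
  _ = ENNReal.ofReal (2*r) ^ d := by simp

lemma measurable_coord (i : Fin d) : Measurable (fun x : EuclideanSpace ℝ (Fin d) => x i) :=
  (measurable_pi_apply i).comp (MeasurableEquiv.toLp 2 (Fin d → ℝ)).symm.measurable


def cubePiece (d m : ℕ) (v : Fin d → Fin (m+1)) : Set (EuclideanSpace ℝ (Fin d)) :=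
  Qd d ∩ {x | ∀ i, x i ∈ Ico ((v i : ℝ)/(m+1)) (((v i : ℝ)+1)/(m+1))}

lemma cp_subset (m : ℕ) (v : Fin d → Fin (m+1)) : cubePiece d m v ⊆ Qd d := inter_subset_left

lemma cp_measurable (m : ℕ) (v : Fin d → Fin (m+1)) : MeasurableSet (cubePiece d m v) := by
  apply measurableSet_Qd.inter
  have : {x : EuclideanSpace ℝ (Fin d) | ∀ i, x i ∈ Ico ((v i : ℝ)/(m+1)) (((v i : ℝ)+1)/(m+1))}
      = ⋂ i, (fun x : EuclideanSpace ℝ (Fin d) => x i) ⁻¹' (Ico ((v i : ℝ)/(m+1)) (((v i : ℝ)+1)/(m+1))) := by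
    ext x; simp [Set.mem_iInter]
  rw [this]
  exact MeasurableSet.iInter fun i => (measurable_coord i) measurableSet_Ico

lemma cp_disjoint (m : ℕ) {v w : Fin d → Fin (m+1)} (hvw : v ≠ w) :
    Disjoint (cubePiece d m v) (cubePiece d m w) := by
  rw [Set.disjoint_left]
  rintro x ⟨-, hxv⟩ ⟨-, hxw⟩
  apply hvw
  funext i
  by_contra hne
  have h1 := hxv i
  have h2 := hxw i
  have hm1 : (0:ℝ) < (m+1:ℝ) := by positivity
  have key : ∀ (a b : Fin (m+1)), (a : ℕ) < (b : ℕ) →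
      ¬ (x i ∈ Ico ((a : ℝ)/(m+1)) (((a : ℝ)+1)/(m+1)) ∧
         x i ∈ Ico ((b : ℝ)/(m+1)) (((b : ℝ)+1)/(m+1))) := by
    rintro a b hab ⟨ha, hb⟩
    have h1 : ((a : ℝ) + 1) ≤ (b : ℝ) := by exact_mod_cast hab
    have h2 : ((a : ℝ)+1)/(m+1) ≤ (b : ℝ)/(m+1) := by
      gcongr
    exact absurd (ha.2.trans_le (h2.trans hb.1)) (lt_irrefl _)
  rcases lt_or_gt_of_ne (fun h : (v i : ℕ) = (w i : ℕ) => hne (Fin.ext h)) with h | h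
  · exact key _ _ h ⟨h1, h2⟩
  · exact key _ _ h ⟨h2, h1⟩

lemma cp_cover (m : ℕ) : (⋃ v : Fin d → Fin (m+1), cubePiece d m v) = Qd d := by
  apply subset_antisymm (iUnion_subset fun v => cp_subset m v)
  intro x hx
  have hm1 : (0:ℝ) < (m+1:ℝ) := by positivity
  have hv : ∀ i : Fin d, ∃ k : Fin (m+1), x i ∈ Ico ((k : ℝ)/(m+1)) (((k : ℝ)+1)/(m+1)) := by
    intro i
    have hx1 := hx i
    have h0 : 0 ≤ x i * (m+1) := by nlinarith [hx1.1]
    have hlt : x i * (m+1) < (m+1 : ℝ) := by nlinarith [hx1.2]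
    refine ⟨⟨Nat.floor (x i * (m+1)), ?_⟩, ?_, ?_⟩
    · exact Nat.floor_lt h0 |>.mpr (by exact_mod_cast hlt)
    · show (Nat.floor (x i * (m+1)) : ℝ) / (m+1) ≤ x i
      rw [div_le_iff₀ hm1]
      exact Nat.floor_le h0
    · show x i < ((Nat.floor (x i * (m+1)) : ℝ) + 1) / (m+1)
      rw [lt_div_iff₀ hm1]
      exact Nat.lt_floor_add_one _
  choose v hvmem using hv
  exact mem_iUnion.mpr ⟨v, hx, hvmem⟩

lemma cp_diam (m : ℕ) (v : Fin d → Fin (m+1)) {a b : EuclideanSpace ℝ (Fin d)}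
    (ha : a ∈ cubePiece d m v) (hb : b ∈ cubePiece d m v) :
    dist a b ≤ Real.sqrt d / (m+1) := by
  have hm1 : (0:ℝ) < (m+1:ℝ) := by positivity
  have hcoord : ∀ i, dist (a i) (b i) ^ 2 ≤ (1/(m+1):ℝ)^2 := by
    intro i
    have h1 := ha.2 i
    have h2 := hb.2 i
    have hlen : ((v i:ℝ)+1)/(m+1) - (v i:ℝ)/(m+1) = 1/(m+1) := by field_simp; ring
    have : |a i - b i| ≤ 1/(m+1) := by
      rw [abs_le]
      constructor
      · linarith [h1.1, h2.2]
      · linarith [h1.2, h2.1]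
    calc dist (a i) (b i) ^ 2 = |a i - b i| ^ 2 := by rw [Real.dist_eq]
    _ ≤ (1/(m+1):ℝ)^2 := pow_le_pow_left₀ (abs_nonneg _) this 2
  rw [EuclideanSpace.dist_eq]
  have hsum : (∑ i, dist (a i) (b i) ^ 2) ≤ (d : ℝ) * (1/(m+1))^2 := by
    calc (∑ i, dist (a i) (b i) ^ 2) ≤ ∑ _i : Fin d, (1/(m+1):ℝ)^2 :=
        Finset.sum_le_sum fun i _ => hcoord i
    _ = (d : ℝ) * (1/(m+1))^2 := by simp [Finset.sum_const, mul_comm]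
  calc Real.sqrt (∑ i, dist (a i) (b i) ^ 2) ≤ Real.sqrt ((d:ℝ) * (1/(m+1))^2) :=
      Real.sqrt_le_sqrt hsum
  _ = Real.sqrt d * (1/(m+1)) := by
      rw [Real.sqrt_mul (Nat.cast_nonneg d), Real.sqrt_sq (by positivity)]
  _ = Real.sqrt d / (m+1) := by ring

variable {f : EuclideanSpace ℝ (Fin d) → EuclideanSpace ℝ (Fin d)}

lemma image_diff_eq (hb : Set.BijOn f (Qd d) (Qd d)) {s : Set (EuclideanSpace ℝ (Fin d))}
    (hsQ : s ⊆ Qd d) : f '' (Qd d \ s) = Qd d \ f '' s := by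
  ext y
  constructor
  · rintro ⟨x, ⟨hxQ, hxs⟩, rfl⟩
    refine ⟨hb.mapsTo hxQ, ?_⟩
    rintro ⟨x', hx', hfx⟩
    exact hxs (hb.injOn (hsQ hx') hxQ hfx ▸ hx')
  · rintro ⟨hyQ, hyA⟩
    obtain ⟨x, hxQ, rfl⟩ := hb.surjOn hyQ
    exact ⟨x, ⟨hxQ, fun hxs => hyA ⟨x, hxs, rfl⟩⟩, rfl⟩

lemma nullMeasurable_image (hb : Set.BijOn f (Qd d) (Qd d))
    (hm : ∀ s ⊆ Qd d, MeasurableSet s → volume (f '' s) = volume s)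
    {s : Set (EuclideanSpace ℝ (Fin d))} (hsQ : s ⊆ Qd d) (hs : MeasurableSet s) :
    NullMeasurableSet (f '' s) volume := by
  set A := f '' s with hA
  have hAQ : A ⊆ Qd d := fun y ⟨x, hx, hxy⟩ => hxy ▸ hb.mapsTo (hsQ hx)
  have hcompl : f '' (Qd d \ s) = Qd d \ A := image_diff_eq hb hsQ
  have hμA : volume A = volume s := hm s hsQ hs
  have hμAc : volume (Qd d \ A) = volume (Qd d \ s) := by
    rw [← hcompl]; exact hm _ diff_subset (measurableSet_Qd.diff hs)
  set H1 := toMeasurable volume A ∩ Qd d with hH1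
  set H2 := toMeasurable volume (Qd d \ A) ∩ Qd d with hH2
  have hH1m : MeasurableSet H1 := (measurableSet_toMeasurable _ _).inter measurableSet_Qd
  have hH2m : MeasurableSet H2 := (measurableSet_toMeasurable _ _).inter measurableSet_Qd
  have hAH1 : A ⊆ H1 := subset_inter (subset_toMeasurable _ _) hAQ
  have hAcH2 : Qd d \ A ⊆ H2 := subset_inter (subset_toMeasurable _ _) diff_subset
  have hμH1 : volume H1 = volume s := le_antisymm
    (by rw [← hμA]; exact (measure_mono inter_subset_left).trans_eq (measure_toMeasurable _))
    (hμA ▸ measure_mono hAH1)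
  have hμH2 : volume H2 = volume (Qd d \ s) := le_antisymm
    (by rw [← hμAc]; exact (measure_mono inter_subset_left).trans_eq (measure_toMeasurable _))
    (hμAc ▸ measure_mono hAcH2)
  have hunion : H1 ∪ H2 = Qd d := by
    apply subset_antisymm (union_subset inter_subset_right inter_subset_right)
    intro x hx
    by_cases hxA : x ∈ A
    · exact Or.inl (hAH1 hxA)
    · exact Or.inr (hAcH2 ⟨hx, hxA⟩)
  have hsum : volume s + volume (Qd d \ s) = volume (Qd d) := by
    have := measure_inter_add_diff (μ := volume) (Qd d) hs
    rwa [inter_eq_right.mpr hsQ] at this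
  have hIE : volume (H1 ∪ H2) + volume (H1 ∩ H2) = volume H1 + volume H2 :=
    measure_union_add_inter _ hH2m
  rw [hunion, hμH1, hμH2, hsum, volume_Qd] at hIE
  have hint : volume (H1 ∩ H2) = 0 := by
    have h1 : (1 : ENNReal) + volume (H1 ∩ H2) = 1 + 0 := by
      rw [add_zero, hIE]
    exact (ENNReal.add_right_inj ENNReal.one_ne_top).mp h1
  have hdecomp : A = (Qd d \ H2) ∪ (A ∩ H2) := by
    ext x
    constructor
    · intro hx
      by_cases hxH2 : x ∈ H2
      · exact Or.inr ⟨hx, hxH2⟩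
      · exact Or.inl ⟨hAQ hx, hxH2⟩
    · rintro (⟨hxQ, hxH2⟩ | ⟨hx, _⟩)
      · by_contra hxA
        exact hxH2 (hAcH2 ⟨hxQ, hxA⟩)
      · exact hx
  have hnull : volume (A ∩ H2) = 0 :=
    measure_mono_null (inter_subset_inter_left _ hAH1) hint
  rw [hdecomp]
  exact (measurableSet_Qd.diff hH2m).nullMeasurableSet.union
    (NullMeasurableSet.of_null hnull)

lemma image_subset_Qd (hb : Set.BijOn f (Qd d) (Qd d)) {s : Set (EuclideanSpace ℝ (Fin d))}
    (hsQ : s ⊆ Qd d) : f '' s ⊆ Qd d := fun y ⟨x, hx, hxy⟩ => hxy ▸ hb.mapsTo (hsQ hx)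

lemma image_disjoint (hb : Set.BijOn f (Qd d) (Qd d)) {s t : Set (EuclideanSpace ℝ (Fin d))}
    (hs : s ⊆ Qd d) (ht : t ⊆ Qd d) (hst : Disjoint s t) : Disjoint (f '' s) (f '' t) := by
  rw [Set.disjoint_left]
  rintro y ⟨x, hx, rfl⟩ ⟨x', hx', hfx⟩
  exact (Set.disjoint_left.mp hst) hx (hb.injOn (ht hx') (hs hx) hfx ▸ hx')

lemma tsum_half_pow : (∑' m : ℕ, ((2:ENNReal))⁻¹^(m+1)) = 1 := by
  have h1 : (∑' m : ℕ, ((2:ENNReal))⁻¹^(m+1)) = (∑' m : ℕ, ((2:ENNReal))⁻¹^m) * 2⁻¹ := by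
    rw [← ENNReal.tsum_mul_right]
    congr 1; funext m; rw [pow_succ]
  rw [h1, ENNReal.tsum_geometric]
  have h2 : (1 : ENNReal) - 2⁻¹ = 2⁻¹ := ENNReal.one_sub_inv_two
  rw [h2, inv_inv]
  rw [ENNReal.mul_inv_cancel] <;> norm_num

theorem key_preimage_bound (hb : Set.BijOn f (Qd d) (Qd d))
    (hm : ∀ s ⊆ Qd d, MeasurableSet s → volume (f '' s) = volume s)
    {B : Set (EuclideanSpace ℝ (Fin d))} (hBQ : B ⊆ Qd d) (hBo : IsOpen B) :
    volume (Qd d ∩ f ⁻¹' B) ≤ volume B := by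
  classical
  -- the inverse function
  have hsur : ∀ y : EuclideanSpace ℝ (Fin d), ∃ x : EuclideanSpace ℝ (Fin d),
      y ∈ Qd d → (x ∈ Qd d ∧ f x = y) := by
    intro y
    by_cases h : y ∈ Qd d
    · obtain ⟨x, hx, hfx⟩ := hb.surjOn h
      exact ⟨x, fun _ => ⟨hx, hfx⟩⟩
    · exact ⟨y, fun h' => absurd h' h⟩
  choose g hg using hsur
  have hgQ : ∀ y ∈ Qd d, g y ∈ Qd d := fun y hy => (hg y hy).1
  have hfg : ∀ y ∈ Qd d, f (g y) = y := fun y hy => (hg y hy).2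
  have hgf : ∀ x ∈ Qd d, g (f x) = x := fun x hx =>
    hb.injOn (hgQ _ (hb.mapsTo hx)) hx (hfg _ (hb.mapsTo hx))
  have hginj : Set.InjOn g (Qd d) := fun y1 h1 y2 h2 he => by
    rw [← hfg y1 h1, ← hfg y2 h2, he]
  have himg : ∀ s ⊆ Qd d, f '' (g '' s) = s := by
    intro s hs
    ext y; constructor
    · rintro ⟨x, ⟨z, hz, rfl⟩, rfl⟩; rwa [hfg z (hs hz)]
    · intro hy; exact ⟨g y, ⟨y, hy, rfl⟩, hfg y (hs hy)⟩
  have hP : Qd d ∩ f ⁻¹' B = g '' B := by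
    ext x; constructor
    · rintro ⟨hxQ, hxB⟩
      exact ⟨f x, hxB, hgf x hxQ⟩
    · rintro ⟨y, hy, rfl⟩
      exact ⟨hgQ y (hBQ hy), by rw [mem_preimage, hfg y (hBQ hy)]; exact hy⟩
  rw [hP]
  apply ENNReal.le_of_forall_pos_le_add
  intro ε' hε' hBfin
  set ε : ENNReal := (ε' : ENNReal) with hε
  have hεne : ε ≠ 0 := by simpa [hε] using hε'.ne'
  set δ : ℕ → ENNReal := fun m => ε * 2⁻¹^(m+1) with hδ
  have hδne : ∀ m, δ m ≠ 0 := fun m =>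
    mul_ne_zero hεne (pow_ne_zero _ (by norm_num))
  -- level construction
  have hlevel : ∀ m : ℕ, ∃ K : (Fin d → Fin (m+1)) → Set (EuclideanSpace ℝ (Fin d)),
      (∀ v, IsCompact (K v)) ∧ (∀ v, K v ⊆ f '' (cubePiece d m v)) ∧
      1 ≤ volume (⋃ v, K v) + δ m := by
    intro m
    set δv : ENNReal := δ m / (Fintype.card (Fin d → Fin (m+1)) : ENNReal) with hδv
    have hcardne : (Fintype.card (Fin d → Fin (m+1)) : ENNReal) ≠ 0 := by
      simp [Fintype.card_ne_zero]
    have hδvne : δv ≠ 0 := by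
      rw [hδv]
      simp only [ne_eq, ENNReal.div_eq_zero_iff, not_or]
      exact ⟨hδne m, ENNReal.natCast_ne_top _⟩
    have hpiece : ∀ v : Fin d → Fin (m+1), ∃ K : Set (EuclideanSpace ℝ (Fin d)),
        IsCompact K ∧ K ⊆ f '' (cubePiece d m v) ∧
        volume (f '' (cubePiece d m v)) ≤ volume K + δv := by
      intro v
      obtain ⟨M, hMsub, hMmeas, hMae⟩ :=
        (nullMeasurable_image hb hm (cp_subset m v) (cp_measurable m v)).exists_measurable_subset_ae_eq
      have hMμ : volume M = volume (f '' (cubePiece d m v)) := measure_congr hMae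
      have hMfin : volume M ≠ ⊤ := by
        rw [hMμ, hm _ (cp_subset m v) (cp_measurable m v)]
        exact ((measure_mono (cp_subset m v)).trans_eq volume_Qd).trans_lt ENNReal.one_lt_top |>.ne
      obtain ⟨K, hKM, hKcomp, hlt⟩ := hMmeas.exists_isCompact_lt_add hMfin hδvne
      exact ⟨K, hKcomp, hKM.trans hMsub, by rw [← hMμ]; exact hlt.le⟩
    choose K hKcomp hKsub hKle using hpiece
    refine ⟨K, hKcomp, hKsub, ?_⟩
    have hdisjK : Pairwise (Function.onFun Disjoint K) := fun v w hvw =>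
      Set.disjoint_of_subset (hKsub v) (hKsub w)
        (image_disjoint hb (cp_subset m v) (cp_subset m w) (cp_disjoint m hvw))
    have hUK : volume (⋃ v, K v) = ∑ v, volume (K v) := by
      rw [measure_iUnion (fun v w hvw => hdisjK hvw) (fun v => (hKcomp v).measurableSet),
        tsum_fintype]
    have hUcp : (1:ENNReal) = ∑ v, volume (f '' (cubePiece d m v)) := by
      have hu : (⋃ v, f '' (cubePiece d m v)) = Qd d := by
        rw [← image_iUnion, cp_cover]
        exact hb.image_eq
      have := measure_iUnion₀ (μ := volume)
        (fun v w hvw => ((image_disjoint hb (cp_subset m v) (cp_subset m w)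
          (cp_disjoint m hvw)).aedisjoint))
        (fun v => nullMeasurable_image hb hm (cp_subset m v) (cp_measurable m v))
      rw [hu, volume_Qd] at this
      rw [this, tsum_fintype]
    calc (1:ENNReal) = ∑ v, volume (f '' (cubePiece d m v)) := hUcp
    _ ≤ ∑ v, (volume (K v) + δv) := Finset.sum_le_sum fun v _ => hKle v
    _ = (∑ v, volume (K v)) + (Fintype.card (Fin d → Fin (m+1)) : ENNReal) * δv := by
        rw [Finset.sum_add_distrib, Finset.sum_const, Finset.card_univ, nsmul_eq_mul]
    _ ≤ volume (⋃ v, K v) + δ m := by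
        rw [hUK]
        exact add_le_add_right (ENNReal.mul_div_le) _
  choose Kfam hKcomp hKsub hKμ using hlevel
  set Kum : ℕ → Set (EuclideanSpace ℝ (Fin d)) := fun m => ⋃ v, Kfam m v with hKum
  have hKumcomp : ∀ m, IsCompact (Kum m) := fun m => isCompact_iUnion (hKcomp m)
  have hKumQ : ∀ m, Kum m ⊆ Qd d := fun m =>
    iUnion_subset fun v => (hKsub m v).trans (image_subset_Qd hb (cp_subset m v))
  set K : Set (EuclideanSpace ℝ (Fin d)) := ⋂ m, Kum m with hK
  have hKQ : K ⊆ Qd d := (iInter_subset _ 0).trans (hKumQ 0)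
  have hKcompact : IsCompact K :=
    (hKumcomp 0).of_isClosed_subset (isClosed_iInter fun m => (hKumcomp m).isClosed)
      (iInter_subset _ 0)
  have hμQK : volume (Qd d \ K) ≤ ε := by
    have hsub : Qd d \ K ⊆ ⋃ m, (Qd d \ Kum m) := by
      intro x ⟨hxQ, hxK⟩
      rw [mem_iInter] at hxK
      push_neg at hxK
      obtain ⟨m, hmx⟩ := hxK
      exact mem_iUnion.mpr ⟨m, hxQ, hmx⟩
    calc volume (Qd d \ K) ≤ ∑' m, volume (Qd d \ Kum m) :=
        (measure_mono hsub).trans (measure_iUnion_le _)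
    _ ≤ ∑' m, δ m := by
        apply ENNReal.tsum_le_tsum
        intro m
        have hd : volume (Qd d \ Kum m) = 1 - volume (Kum m) := by
          rw [measure_diff (hKumQ m) (hKumcomp m).measurableSet.nullMeasurableSet
            (((measure_mono (hKumQ m)).trans_eq volume_Qd).trans_lt ENNReal.one_lt_top).ne,
            volume_Qd]
        rw [hd, tsub_le_iff_right]
        rw [add_comm]
        exact hKμ m
    _ = ε := by
        rw [hδ, ENNReal.tsum_mul_left, tsum_half_pow, mul_one]
  have hμK : (1:ENNReal) ≤ volume K + ε := by
    calc (1:ENNReal) = volume (Qd d) := volume_Qd.symm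
    _ ≤ volume (K ∪ (Qd d \ K)) := measure_mono (fun x hx => by
        by_cases h : x ∈ K
        · exact Or.inl h
        · exact Or.inr ⟨hx, h⟩)
    _ ≤ volume K + volume (Qd d \ K) := measure_union_le _ _
    _ ≤ volume K + ε := add_le_add_right hμQK _
  -- continuity of g on K
  have hgmem : ∀ m v, ∀ y ∈ Kfam m v, g y ∈ cubePiece d m v := by
    intro m v y hy
    obtain ⟨z, hz, rfl⟩ := hKsub m v hy
    rwa [hgf z (cp_subset m v hz)]
  have hgcont : ContinuousOn g K := by
    rw [Metric.continuousOn_iff]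
    intro x hxK εc hεc
    obtain ⟨n, hn⟩ := exists_nat_gt (Real.sqrt d / εc)
    have hmlt : Real.sqrt d / (n+1) < εc := by
      rw [div_lt_iff₀ (by positivity)]
      have h1 : Real.sqrt d < εc * (n:ℝ) + εc := by
        have := (div_lt_iff₀ hεc).mp (hn.trans_le (le_refl _))
        nlinarith [Real.sqrt_nonneg (d:ℝ), hεc]
      nlinarith
    have hxKum : x ∈ Kum n := mem_iInter.mp hxK n
    obtain ⟨v₀, hv₀⟩ := mem_iUnion.mp hxKum
    set L : Set (EuclideanSpace ℝ (Fin d)) := ⋃ v : {v : Fin d → Fin (n+1) // v ≠ v₀}, Kfam n v with hL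
    have hLcomp : IsCompact L := isCompact_iUnion (fun v => hKcomp n v)
    have hxL : x ∉ L := by
      intro hxL
      obtain ⟨⟨v, hv⟩, hxv⟩ := mem_iUnion.mp hxL
      have hdis := image_disjoint hb (cp_subset n v) (cp_subset n v₀) (cp_disjoint n hv)
      exact Set.disjoint_left.mp (Set.disjoint_of_subset (hKsub n v) (hKsub n v₀) hdis) hxv hv₀
    obtain ⟨δ₀, hδ₀, hball⟩ := Metric.isOpen_iff.mp hLcomp.isClosed.isOpen_compl x hxL
    refine ⟨δ₀, hδ₀, fun y hyK hdist => ?_⟩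
    have hyL : y ∉ L := hball (Metric.mem_ball.mpr hdist)
    have hyKum : y ∈ Kum n := mem_iInter.mp hyK n
    obtain ⟨v, hyv⟩ := mem_iUnion.mp hyKum
    have hvv0 : v = v₀ := by
      by_contra hne
      exact hyL (mem_iUnion.mpr ⟨⟨v, hne⟩, hyv⟩)
    subst hvv0
    calc dist (g y) (g x) ≤ Real.sqrt d / (n+1) :=
        cp_diam n v (hgmem n v y hyv) (hgmem n v x hv₀)
    _ < εc := hmlt
  -- final computation
  have hgKcomp : IsCompact (g '' K) := hKcompact.image_of_continuousOn hgcont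
  have hgKQ : g '' K ⊆ Qd d := fun x ⟨y, hy, hxy⟩ => hxy ▸ hgQ y (hKQ hy)
  have hgKμ : volume (g '' K) = volume K := by
    have := hm (g '' K) hgKQ hgKcomp.measurableSet
    rw [himg K hKQ] at this; exact this.symm
  have hKBcomp : IsCompact (g '' (K \ B)) :=
    (hKcompact.diff hBo).image_of_continuousOn (hgcont.mono diff_subset)
  have hBKeq : g '' (B ∩ K) = g '' K \ g '' (K \ B) := by
    ext x
    constructor
    · rintro ⟨y, ⟨hyB, hyK⟩, rfl⟩
      refine ⟨⟨y, hyK, rfl⟩, ?_⟩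
      rintro ⟨y', ⟨hy'K, hy'B⟩, he⟩
      exact hy'B (hginj (hKQ hy'K) (hKQ hyK) he ▸ hyB)
    · rintro ⟨⟨y, hyK, rfl⟩, hnot⟩
      by_cases hyB : y ∈ B
      · exact ⟨y, ⟨hyB, hyK⟩, rfl⟩
      · exact absurd ⟨y, ⟨hyK, hyB⟩, rfl⟩ hnot
  have hBKmeas : MeasurableSet (g '' (B ∩ K)) := by
    rw [hBKeq]
    exact hgKcomp.measurableSet.diff hKBcomp.measurableSet
  have hBKQ : g '' (B ∩ K) ⊆ Qd d := fun x ⟨y, hy, hxy⟩ => hxy ▸ hgQ y (hBQ hy.1)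
  have hBKμ : volume (g '' (B ∩ K)) = volume (B ∩ K) := by
    have := hm _ hBKQ hBKmeas
    rw [himg (B ∩ K) (inter_subset_left.trans hBQ)] at this; exact this.symm
  have hsplit : g '' B ⊆ g '' (B ∩ K) ∪ (Qd d \ g '' K) := by
    rintro x ⟨y, hyB, rfl⟩
    by_cases hyK : y ∈ K
    · exact Or.inl ⟨y, ⟨hyB, hyK⟩, rfl⟩
    · refine Or.inr ⟨hgQ y (hBQ hyB), ?_⟩
      rintro ⟨y', hy'K, he⟩
      exact hyK (hginj (hKQ hy'K) (hBQ hyB) he ▸ hy'K)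
  have hμdiff : volume (Qd d \ g '' K) ≤ ε := by
    have hd : volume (Qd d \ g '' K) = 1 - volume (g '' K) := by
      rw [measure_diff hgKQ hgKcomp.measurableSet.nullMeasurableSet
        (((measure_mono hgKQ).trans_eq volume_Qd).trans_lt ENNReal.one_lt_top).ne, volume_Qd]
    rw [hd, hgKμ, tsub_le_iff_right, add_comm]
    exact hμK
  calc volume (g '' B) ≤ volume (g '' (B ∩ K)) + volume (Qd d \ g '' K) :=
      (measure_mono hsplit).trans (measure_union_le _ _)
  _ = volume (B ∩ K) + volume (Qd d \ g '' K) := by rw [hBKμ]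
  _ ≤ volume B + ε := add_le_add (measure_mono inter_subset_left) hμdiff

end auxiliary

lemma ofReal_half : ENNReal.ofReal (1/2 : ℝ) = 1/2 := by
  rw [ENNReal.ofReal_div_of_pos (by norm_num)]
  norm_num

theorem no_uniform_rate_ball (d : ℕ) (hd : 2 ≤ d)
    (T : ℕ → EuclideanSpace ℝ (Fin d) → EuclideanSpace ℝ (Fin d))
    (hbij : ∀ n, Set.BijOn (T n) (Qd d) (Qd d))
    (hmp : ∀ n, ∀ s ⊆ Qd d, MeasurableSet s → volume (T n '' s) = volume s)
    (lam : ℕ → ℝ) (hlam : ∀ n, 0 < lam n) (hlim : Tendsto lam atTop (nhds 0)) :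
    ∃ A ⊆ Qd d, MeasurableSet A ∧ volume A = 1/2 ∧
      ∃ ns : ℕ → ℕ, StrictMono ns ∧ (∀ j, 0 < ns j) ∧
        ∀ j : ℕ, ∃ c : EuclideanSpace ℝ (Fin d),
          Metric.ball c (lam (ns j) ^ ((1:ℝ) / d)) ⊆ T (ns j) '' A := by
  classical
  have hd0 : 0 < d := by omega
  -- threshold sequence
  set η : ℕ → ℝ := fun j => (1/2:ℝ)^d * (1/2)^(j+3) with hη
  have hηpos : ∀ j, 0 < η j := fun j => by positivity
  -- selection of subsequence
  have hsel : ∀ (j N : ℕ), ∃ n, N ≤ n ∧ lam n < η j := by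
    intro j N
    have he := hlim.eventually_lt_const (hηpos j)
    rw [eventually_atTop] at he
    obtain ⟨N0, hN0⟩ := he
    exact ⟨max N N0, le_max_left _ _, hN0 _ (le_max_right _ _)⟩
  choose sel hsel1 hsel2 using hsel
  set ns : ℕ → ℕ := fun j => Nat.rec (sel 0 1) (fun j ih => sel (j+1) (ih+1)) j with hns
  have hns0 : ns 0 = sel 0 1 := rfl
  have hnssucc : ∀ j, ns (j+1) = sel (j+1) (ns j + 1) := fun j => rfl
  have hnsmono : StrictMono ns := strictMono_nat_of_lt_succ fun j => by
    rw [hnssucc]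
    have := hsel1 (j+1) (ns j + 1)
    omega
  have hnspos : ∀ j, 0 < ns j := by
    intro j
    have h0 : 1 ≤ ns 0 := by rw [hns0]; exact hsel1 0 1
    calc 0 < ns 0 := h0
    _ ≤ ns j := hnsmono.monotone (Nat.zero_le j)
  have hlamns : ∀ j, lam (ns j) < η j := by
    intro j
    cases j with
    | zero => rw [hns0]; exact hsel2 0 1
    | succ j => rw [hnssucc]; exact hsel2 (j+1) (ns j + 1)
  -- radii
  set r : ℕ → ℝ := fun j => lam (ns j) ^ ((1:ℝ)/d) with hr
  have hrpos : ∀ j, 0 < r j := fun j => Real.rpow_pos_of_pos (hlam _) _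
  have hrhalf : ∀ j, r j ≤ 1/2 := by
    intro j
    have h1 : lam (ns j) ≤ (1/2:ℝ)^d := by
      have h2 : (1/2:ℝ)^(j+3) ≤ 1 := pow_le_one₀ (by norm_num) (by norm_num)
      have h5 : η j = (1/2:ℝ)^d * (1/2)^(j+3) := rfl
      have h6 := hlamns j
      rw [h5] at h6
      nlinarith [pow_pos (show (0:ℝ) < 1/2 by norm_num) d]
    calc r j ≤ ((1/2:ℝ)^d) ^ ((1:ℝ)/d) :=
        Real.rpow_le_rpow (hlam _).le h1 (one_div_nonneg.mpr (Nat.cast_nonneg d))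
    _ = 1/2 := by
        rw [← Real.rpow_natCast (1/2:ℝ) d, ← Real.rpow_mul (by norm_num)]
        rw [mul_one_div, div_self (by exact_mod_cast hd0.ne')]
        exact Real.rpow_one _
  -- balls and preimages
  set B : ℕ → Set (EuclideanSpace ℝ (Fin d)) := fun j => Metric.ball (midpt d) (r j) with hB
  have hBQ : ∀ j, B j ⊆ Qd d := fun j => ball_subset_Qd (hrhalf j)
  set P : ℕ → Set (EuclideanSpace ℝ (Fin d)) := fun j => Qd d ∩ (T (ns j)) ⁻¹' (B j) with hP
  have hPQ : ∀ j, P j ⊆ Qd d := fun j => inter_subset_left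
  have hPle : ∀ j, volume (P j) ≤ (2:ENNReal)⁻¹ ^ (j+3) := by
    intro j
    have h1 := key_preimage_bound (hbij (ns j)) (hmp (ns j)) (hBQ j) Metric.isOpen_ball
    have h2 : volume (B j) ≤ (2:ENNReal)⁻¹ ^ (j+3) := by
      calc volume (B j) ≤ ENNReal.ofReal (2 * r j) ^ d := volume_ball_le _ _
      _ = ENNReal.ofReal ((2 * r j)^d) := by
          rw [ENNReal.ofReal_pow (mul_nonneg (by norm_num) (hrpos j).le)]
      _ = ENNReal.ofReal (2^d * lam (ns j)) := by
          congr 1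
          rw [mul_pow]
          congr 1
          rw [← Real.rpow_natCast (lam (ns j) ^ ((1:ℝ)/d)) d, ← Real.rpow_mul (hlam _).le]
          rw [one_div, inv_mul_cancel₀ (by exact_mod_cast hd0.ne' : (d:ℝ) ≠ 0)]
          exact Real.rpow_one _
      _ ≤ ENNReal.ofReal ((1/2:ℝ)^(j+3)) := by
          apply ENNReal.ofReal_le_ofReal
          have h3 : (2:ℝ)^d * ((1/2:ℝ)^d * (1/2)^(j+3)) = (1/2)^(j+3) := by
            rw [← mul_assoc, ← mul_pow]
            norm_num
          have h4 : (2:ℝ)^d * lam (ns j) ≤ (2:ℝ)^d * ((1/2:ℝ)^d * (1/2)^(j+3)) :=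
            mul_le_mul_of_nonneg_left (hlamns j).le (by positivity)
          linarith
      _ = (2:ENNReal)⁻¹ ^ (j+3) := by
          rw [ENNReal.ofReal_pow (by norm_num)]
          congr 1
          rw [ofReal_half, one_div]
    exact h1.trans h2
  -- total measure of union
  have htot : volume (⋃ j, P j) ≤ 1/4 := by
    calc volume (⋃ j, P j) ≤ ∑' j, volume (P j) := measure_iUnion_le _
    _ ≤ ∑' j : ℕ, (2:ENNReal)⁻¹ ^ (j+3) := ENNReal.tsum_le_tsum hPle
    _ = (2:ENNReal)⁻¹^2 * ∑' j : ℕ, (2:ENNReal)⁻¹ ^ (j+1) := by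
        rw [← ENNReal.tsum_mul_left]
        congr 1; funext j; ring
    _ = 1/4 := by
        rw [tsum_half_pow, mul_one]
        rw [ENNReal.div_eq_inv_mul, mul_one, ← ENNReal.inv_pow]
        norm_num
  -- measurable hull
  set U : Set (EuclideanSpace ℝ (Fin d)) :=
    toMeasurable volume (⋃ j, P j) ∩ Qd d with hU
  have hUmeas : MeasurableSet U := (measurableSet_toMeasurable _ _).inter measurableSet_Qd
  have hUQ : U ⊆ Qd d := inter_subset_right
  have hPU : ∀ j, P j ⊆ U := fun j =>
    subset_inter ((subset_iUnion P j).trans (subset_toMeasurable _ _)) (hPQ j)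
  have hUμ : volume U ≤ 1/4 := by
    calc volume U ≤ volume (toMeasurable volume (⋃ j, P j)) := measure_mono inter_subset_left
    _ = volume (⋃ j, P j) := measure_toMeasurable _
    _ ≤ 1/4 := htot
  -- IVT top-up
  set i0 : Fin d := ⟨0, hd0⟩ with hi0
  set Af : ℝ → Set (EuclideanSpace ℝ (Fin d)) :=
    fun t => U ∪ (Qd d ∩ {x | x i0 < t}) with hAf
  have hAfmeas : ∀ t, MeasurableSet (Af t) := fun t =>
    hUmeas.union (measurableSet_Qd.inter ((measurable_coord i0) measurableSet_Iio))
  have hAfQ : ∀ t, Af t ⊆ Qd d := fun t => union_subset hUQ inter_subset_left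
  have hAffin : ∀ t, volume (Af t) ≠ ⊤ := fun t =>
    (((measure_mono (hAfQ t)).trans_eq volume_Qd).trans_lt ENNReal.one_lt_top).ne
  have hAfmono : ∀ s t : ℝ, s ≤ t → Af s ⊆ Af t := by
    intro s t hst
    apply union_subset_union_right
    exact inter_subset_inter_right _ (fun x hx => lt_of_lt_of_le hx hst)
  have hslab : ∀ s t : ℝ, s ≤ t → volume (Af t) ≤ volume (Af s) + ENNReal.ofReal (t - s) := by
    intro s t hst
    have hsub2 : Af t ⊆ Af s ∪ (Qd d ∩ {x | x i0 ∈ Ico s t}) := by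
      rintro x (hxU | ⟨hxQ, hxt⟩)
      · exact Or.inl (Or.inl hxU)
      · by_cases hxs : x i0 < s
        · exact Or.inl (Or.inr ⟨hxQ, hxs⟩)
        · exact Or.inr ⟨hxQ, le_of_not_gt hxs, hxt⟩
    have hslabμ : volume (Qd d ∩ {x | x i0 ∈ Ico s t}) ≤ ENNReal.ofReal (t - s) := by
      set S : Fin d → Set ℝ := fun i => if i = i0 then Ico s t else Ioo 0 1 with hS
      have hSmeas : ∀ i, MeasurableSet (S i) := by
        intro i
        by_cases hi : i = i0 <;> simp [hS, hi, measurableSet_Ico, measurableSet_Ioo]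
      have hsub3 : Qd d ∩ {x | x i0 ∈ Ico s t} ⊆
          (MeasurableEquiv.toLp 2 (Fin d → ℝ)).symm ⁻¹' (univ.pi S) := by
        rintro x ⟨hxQ, hxI⟩
        intro i _
        show x i ∈ S i
        by_cases hi : i = i0
        · subst hi; simpa [hS] using hxI
        · simpa [hS, hi] using hxQ i
      calc volume (Qd d ∩ {x | x i0 ∈ Ico s t})
          ≤ volume ((MeasurableEquiv.toLp 2 (Fin d → ℝ)).symm ⁻¹' (univ.pi S)) :=
            measure_mono hsub3
      _ = volume (univ.pi S) :=
            (EuclideanSpace.volume_preserving_symm_measurableEquiv_toLp (Fin d)).measure_preimage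
              (MeasurableSet.univ_pi hSmeas).nullMeasurableSet
      _ = ∏ i, volume (S i) := volume_pi_pi S
      _ = ENNReal.ofReal (t - s) := by
            rw [Finset.prod_eq_single i0]
            · simp [hS, Real.volume_Ico]
            · intro i _ hi; simp [hS, hi, Real.volume_Ioo]
            · intro h; exact absurd (Finset.mem_univ i0) h
    calc volume (Af t) ≤ volume (Af s ∪ (Qd d ∩ {x | x i0 ∈ Ico s t})) := measure_mono hsub2
    _ ≤ volume (Af s) + volume (Qd d ∩ {x | x i0 ∈ Ico s t}) := measure_union_le _ _
    _ ≤ volume (Af s) + ENNReal.ofReal (t - s) := add_le_add_right hslabμ _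
  set mfun : ℝ → ℝ := fun t => (volume (Af t)).toReal with hmfun
  have hmono : Monotone mfun := fun s t hst =>
    ENNReal.toReal_mono (hAffin t) (measure_mono (hAfmono s t hst))
  have hkey2 : ∀ s t : ℝ, s ≤ t → mfun t ≤ mfun s + (t - s) := by
    intro s t hst
    have h1 := hslab s t hst
    have h2 : (volume (Af s) + ENNReal.ofReal (t - s)).toReal
        = mfun s + (t - s) := by
      rw [ENNReal.toReal_add (hAffin s) ENNReal.ofReal_ne_top, ENNReal.toReal_ofReal (by linarith)]
    calc mfun t ≤ (volume (Af s) + ENNReal.ofReal (t - s)).toReal :=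
        ENNReal.toReal_mono (by simp [ENNReal.add_ne_top, hAffin s, ENNReal.ofReal_ne_top]) h1
    _ = mfun s + (t - s) := h2
  have hlip : LipschitzWith 1 mfun := by
    apply LipschitzWith.of_dist_le_mul
    intro s t
    rw [Real.dist_eq, Real.dist_eq, NNReal.coe_one, one_mul]
    rcases le_total s t with h | h
    · rw [abs_of_nonpos (by linarith [hmono h] : mfun s - mfun t ≤ 0),
        abs_of_nonpos (by linarith : s - t ≤ 0)]
      have := hkey2 s t h
      linarith
    · rw [abs_of_nonneg (by linarith [hmono h] : 0 ≤ mfun s - mfun t),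
        abs_of_nonneg (by linarith : 0 ≤ s - t)]
      have := hkey2 t s h
      linarith
  have hA0 : Af 0 = U := by
    apply subset_antisymm
    · rintro x (h | ⟨hxQ, hx0⟩)
      · exact h
      · exact absurd hx0 (not_lt.mpr (hxQ i0).1.le)
    · exact subset_union_left
  have hm0 : mfun 0 ≤ 1/4 := by
    have h1 : volume (Af 0) ≤ 1/4 := by rw [hA0]; exact hUμ
    have := ENNReal.toReal_mono (by norm_num) h1
    simpa using this
  have hA1 : Af 1 = Qd d := by
    apply subset_antisymm (hAfQ 1)
    exact fun x hx => Or.inr ⟨hx, (hx i0).2⟩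
  have hm1 : mfun 1 = 1 := by
    show (volume (Af 1)).toReal = 1
    rw [hA1, volume_Qd]
    simp
  have hmem : (1/2:ℝ) ∈ Icc (mfun 0) (mfun 1) := ⟨by linarith, by rw [hm1]; norm_num⟩
  obtain ⟨t0, _, ht0⟩ := intermediate_value_Icc (by norm_num : (0:ℝ) ≤ 1)
    hlip.continuous.continuousOn hmem
  have hvolA : volume (Af t0) = 1/2 := by
    rw [← ENNReal.ofReal_toReal (hAffin t0)]
    show ENNReal.ofReal (mfun t0) = 1/2
    rw [ht0, ofReal_half]
  refine ⟨Af t0, hAfQ t0, hAfmeas t0, hvolA, ns, hnsmono, hnspos, ?_⟩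
  intro j
  refine ⟨midpt d, ?_⟩
  intro y hy
  have hyB : y ∈ B j := hy
  have hyQ : y ∈ Qd d := hBQ j hyB
  obtain ⟨x, hxQ, hxy⟩ := (hbij (ns j)).surjOn hyQ
  have hxP : x ∈ P j := ⟨hxQ, by rw [mem_preimage, hxy]; exact hyB⟩
  exact ⟨x, Or.inl (hPU j hxP), hxy⟩
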